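/- Let R be a ring, σ : R → R a ring endomorphism, F a quotient field (or ring) of R via a surjection j_0 : R → F compatible with a ring endomorphism σ_F of F. Let 𝒟 be a finitely generated free R-module with a σ-semilinear endomorphism φ_𝒟 whose linearization R ⊗_{σ,R} 𝒟 → 𝒟 is an isomorphism, let D = F ⊗_{R,j_0} 𝒟 with induced σ_F-semilinear automorphism φ_D. Suppose further that the kernel ideal I = ker(j_0) satisfies: σ(I) ⊂ I and the induced maps make the relevant completion arguments work (as for R = ℚ⊗R_PD, F the fraction field of W(k), σ induced by s ↦ s^p). Then an F-linear section s : D → 𝒟 of the canonical surjection j_0 : 𝒟 → D satisfying s ∘ φ_D = φ_𝒟 ∘ s is unique if it exists. -/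
import Mathlib


/-- uniqueness of the Frobenius-equivariant section.  Let `F ⊆ R` with an
`F`-algebra retraction `j₀ : R → F` (e.g. `R = ℚ⊗R_PD`, `F = Frac W(k)`, `j₀ : s ↦ 0`),
`σ` a Frobenius on `R` lifting `σ_F` on `F` with `σ(ker j₀) ⊆ (ker j₀)^2` (as for
`σ(s) = s^p`).  Let `𝒟` be a finite free `R`-module, `(ker j₀)`-adically separated, with
a `σ`-semilinear `φ𝒟` whose linearization is onto, and let `D` be its fiber along `j₀`
(via `π` with `ker π = (ker j₀)·𝒟`), with induced bijective `σ_F`-semilinear `φD`.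
Then an `F`-linear section `s : D → 𝒟` of `π` satisfying `s ∘ φD = φ𝒟 ∘ s` is unique. -/
theorem frobenius_section_unique
    (F R : Type*) [Field F] [CommRing R] [Algebra F R]
    (j₀ : R →ₐ[F] F) (σ : R →+* R) (σF : F →+* F)
    (hcomm : ∀ r : R, j₀ (σ r) = σF (j₀ r))
    (hσI : ∀ r : R, j₀ r = 0 → σ r ∈ (RingHom.ker (j₀ : R →+* F)) ^ 2)
    (𝒟 : Type*) [AddCommGroup 𝒟] [Module R 𝒟] [Module F 𝒟] [IsScalarTower F R 𝒟]
    [Module.Free R 𝒟] [Module.Finite R 𝒟]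
    (hsep : (⨅ n : ℕ, ((RingHom.ker (j₀ : R →+* F)) ^ n • ⊤ : Submodule R 𝒟)) = ⊥)
    (φ𝒟 : 𝒟 →+ 𝒟) (hφ𝒟 : ∀ (r : R) (x : 𝒟), φ𝒟 (r • x) = σ r • φ𝒟 x)
    (hlin : Submodule.span R (Set.range φ𝒟) = ⊤)
    (D : Type*) [AddCommGroup D] [Module F D]
    (π : 𝒟 →+ D) (hπ : ∀ (r : R) (x : 𝒟), π (r • x) = j₀ r • π x)
    (hπsurj : Function.Surjective π)
    (hkerπ : ∀ x : 𝒟, π x = 0 ↔ x ∈ ((RingHom.ker (j₀ : R →+* F)) • ⊤ : Submodule R 𝒟))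
    (φD : D →+ D) (hφD : ∀ (f : F) (x : D), φD (f • x) = σF f • φD x)
    (hφDπ : ∀ x : 𝒟, φD (π x) = π (φ𝒟 x)) (hφDbij : Function.Bijective φD)
    (s₁ s₂ : D →ₗ[F] 𝒟)
    (hs₁ : ∀ x : D, π (s₁ x) = x) (hs₂ : ∀ x : D, π (s₂ x) = x)
    (hc₁ : ∀ x : D, s₁ (φD x) = φ𝒟 (s₁ x)) (hc₂ : ∀ x : D, s₂ (φD x) = φ𝒟 (s₂ x)) :
    s₁ = s₂ := by
  set I := RingHom.ker (j₀ : R →+* F) with hI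
  have hmapI : Ideal.map σ I ≤ I ^ 2 := by
    rw [Ideal.map_le_iff_le_comap]
    intro r hr
    exact hσI r hr
  have hφpow : ∀ (n : ℕ) (v : 𝒟), v ∈ (I ^ n • ⊤ : Submodule R 𝒟) →
      φ𝒟 v ∈ (I ^ (2 * n) • ⊤ : Submodule R 𝒟) := by
    intro n v hv
    refine Submodule.smul_induction_on hv ?_ ?_
    · intro r hr m _
      rw [hφ𝒟]
      refine Submodule.smul_mem_smul ?_ trivial
      have h1 : σ r ∈ (Ideal.map σ I) ^ n := by
        rw [← Ideal.map_pow]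
        exact Ideal.mem_map_of_mem σ hr
      have h2 : (Ideal.map σ I) ^ n ≤ (I ^ 2) ^ n := Ideal.pow_right_mono hmapI n
      rw [pow_mul]
      exact h2 h1
    · intro x y hx hy
      rw [map_add]
      exact Submodule.add_mem _ hx hy
  have key : ∀ (n : ℕ) (x : D), s₁ x - s₂ x ∈ (I ^ (n + 1) • ⊤ : Submodule R 𝒟) := by
    intro n
    induction n with
    | zero =>
      intro x
      rw [pow_one, ← hkerπ]
      simp [map_sub, hs₁, hs₂]
    | succ n ih =>
      intro x
      obtain ⟨y, rfl⟩ := hφDbij.2 x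
      have hd : s₁ (φD y) - s₂ (φD y) = φ𝒟 (s₁ y - s₂ y) := by
        rw [hc₁, hc₂, map_sub]
      rw [hd]
      have h3 := hφpow (n + 1) _ (ih y)
      exact Submodule.smul_mono_left (Ideal.pow_le_pow_right (by omega)) h3
  ext x
  have hmem : s₁ x - s₂ x ∈ (⨅ n : ℕ, (I ^ n • ⊤ : Submodule R 𝒟)) := by
    simp only [Submodule.mem_iInf]
    intro n
    exact Submodule.smul_mono_left (Ideal.pow_le_pow_right (Nat.le_succ n)) (key n x)
  rw [hsep] at hmem
  simpa [sub_eq_zero] using hmem
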